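/- Let n ≥ 1 and k₁, k₂ ≥ 1, and let D₁ be a mixture of k₁ subcubes and D₂ be a mixture of k₂ subcubes on {0,1}^n. If E_{D₁}[x_S] = E_{D₂}[x_S] for every S ⊆ [n] with |S| < 2·log₂(k₁ + k₂), then D₁(x) = D₂(x) for every x ∈ {0,1}^n; that is, a mixture of k subcubes is uniquely determined among such mixtures by its moments of degree less than 2·log₂(2k). -/

import Mathlib

/-- The density of the mixture of `k` product distributions on `{0,1}^n` realized by mixing
weights `π` and marginals matrix `m`. -/
noncomputable def mixtureDensity {n k : ℕ} (π : Fin k → ℝ) (m : Fin n → Fin k → ℝ) :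
    (Fin n → Bool) → ℝ :=
  fun x => ∑ j, π j * ∏ i, (if x i then m i j else 1 - m i j)

/-- The `S`-moment `E_D[x_S]` of a density `D` on `{0,1}^n`. -/
noncomputable def momentOf {n : ℕ} (D : (Fin n → Bool) → ℝ) (S : Finset (Fin n)) : ℝ :=
  ∑ x ∈ Finset.univ.filter (fun x : Fin n → Bool => ∀ i ∈ S, x i = true), D x

lemma momentOf_mixture {n k : ℕ} (c : Fin k → ℝ) (m : Fin n → Fin k → ℝ) (S : Finset (Fin n)) :
    momentOf (mixtureDensity c m) S = ∑ j, c j * ∏ i ∈ S, m i j := by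
  classical
  unfold momentOf mixtureDensity
  rw [Finset.sum_comm]
  refine Finset.sum_congr rfl fun j _ => ?_
  rw [← Finset.mul_sum]
  congr 1
  set g : Fin n → Bool → ℝ := fun i b => if b then m i j else if i ∈ S then 0 else 1 - m i j
    with hg
  have h1 : ∑ x ∈ Finset.univ.filter (fun x : Fin n → Bool => ∀ i ∈ S, x i = true),
      (∏ i, (if x i then m i j else 1 - m i j)) = ∑ x : Fin n → Bool, ∏ i, g i (x i) := by
    rw [Finset.sum_filter]
    refine Finset.sum_congr rfl fun x _ => ?_
    by_cases hx : ∀ i ∈ S, x i = true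
    · rw [if_pos hx]
      refine Finset.prod_congr rfl fun i _ => ?_
      cases hxi : x i with
      | true => simp [hg]
      | false =>
          have : i ∉ S := fun hiS => by simp [hx i hiS] at hxi
          simp [hg, this]
    · rw [if_neg hx]
      push_neg at hx
      obtain ⟨i0, hi0S, hi0⟩ := hx
      refine (Finset.prod_eq_zero (Finset.mem_univ i0) ?_).symm
      have : x i0 = false := by simpa using hi0
      simp [hg, this, hi0S]
  have h2 : ∑ x : Fin n → Bool, ∏ i, g i (x i) = ∏ i, (g i true + g i false) := by
    refine Eq.symm ?_
    calc ∏ i, (g i true + g i false) = ∏ i, ∑ b : Bool, g i b := by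
          refine Finset.prod_congr rfl fun i _ => ?_
          rw [Fintype.sum_bool]
      _ = ∑ x ∈ Fintype.piFinset (fun _ : Fin n => (Finset.univ : Finset Bool)),
            ∏ i, g i (x i) := Finset.prod_univ_sum _ _
      _ = ∑ x : Fin n → Bool, ∏ i, g i (x i) := by rw [Fintype.piFinset_univ]
  have h3 : ∏ i, (g i true + g i false) = ∏ i ∈ S, m i j := by
    rw [← Finset.prod_mul_prod_compl S]
    have e1 : ∏ i ∈ S, (g i true + g i false) = ∏ i ∈ S, m i j := by
      refine Finset.prod_congr rfl fun i hi => by simp [hg, hi]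
    have e2 : ∏ i ∈ Sᶜ, (g i true + g i false) = 1 := by
      refine Finset.prod_eq_one fun i hi => ?_
      have : i ∉ S := by simpa using hi
      simp [hg, this]
    rw [e1, e2, mul_one]
  rw [h1, h2, h3]

lemma card_pos_of_ne {n k : ℕ} (c : Fin k → ℝ) (m : Fin n → Fin k → ℝ)
    (hex : ∃ x, mixtureDensity c m x ≠ 0) :
    1 ≤ (Finset.univ.filter (fun j => c j ≠ 0)).card := by
  classical
  obtain ⟨x, hx⟩ := hex
  rw [Nat.one_le_iff_ne_zero, Ne, Finset.card_eq_zero]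
  intro hempty
  apply hx
  unfold mixtureDensity
  refine Finset.sum_eq_zero fun j _ => ?_
  have : c j = 0 := by
    by_contra hc
    have : j ∈ Finset.univ.filter (fun j => c j ≠ 0) := by simp [hc]
    simp [hempty] at this
  simp [this]

lemma mixture_cons {n k : ℕ} (c : Fin k → ℝ) (m : Fin (n+1) → Fin k → ℝ) (b : Bool)
    (x : Fin n → Bool) :
    mixtureDensity c m (Fin.cons b x) =
      mixtureDensity (fun j => c j * (if b then m 0 j else 1 - m 0 j))
        (fun i j => m i.succ j) x := by
  unfold mixtureDensity
  refine Finset.sum_congr rfl fun j _ => ?_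
  rw [Fin.prod_univ_succ]
  simp only [Fin.cons_zero, Fin.cons_succ, mul_assoc]

lemma key (n : ℕ) : ∀ (ν k : ℕ) (c : Fin k → ℝ) (m : Fin n → Fin k → ℝ),
    (∀ i j, m i j = 0 ∨ m i j = 1/2 ∨ m i j = 1) →
    (∀ S : Finset (Fin n), S.card < ν → ∑ j, c j * ∏ i ∈ S, m i j = 0) →
    (∃ x, mixtureDensity c m x ≠ 0) →
    (3:ℝ)^ν ≤ 2^ν * ((Finset.univ.filter (fun j => c j ≠ 0)).card : ℝ) := by
  classical
  induction n with
  | zero =>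
      intro ν k c m hm hvan hex
      cases ν with
      | zero =>
          simp only [pow_zero, one_mul]
          exact_mod_cast card_pos_of_ne c m hex
      | succ t =>
          exfalso
          obtain ⟨x, hx⟩ := hex
          apply hx
          have h0 := hvan ∅ (by simp)
          unfold mixtureDensity
          simpa using h0
  | succ n ih =>
      intro ν k c m hm hvan hex
      cases ν with
      | zero =>
          simp only [pow_zero, one_mul]
          exact_mod_cast card_pos_of_ne c m hex
      | succ t =>
          set m' : Fin n → Fin k → ℝ := fun i j => m i.succ j with hm'def
          have hm' : ∀ i j, m' i j = 0 ∨ m' i j = 1/2 ∨ m' i j = 1 := fun i j => hm i.succ j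
          set a : Fin k → ℝ := fun j => c j * (1 - m 0 j) with ha
          set bb : Fin k → ℝ := fun j => c j * m 0 j with hb
          set e : Fin k → ℝ := fun j => c j * (1 - 2 * m 0 j) with he
          -- moment transfer for c over m'
          have hvc : ∀ S : Finset (Fin n), S.card < t + 1 →
              ∑ j, c j * ∏ i ∈ S, m' i j = 0 := by
            intro S hS
            have := hvan (S.map (Fin.succEmb n)) (by rwa [Finset.card_map])
            rw [← this]
            refine Finset.sum_congr rfl fun j _ => ?_
            rw [Finset.prod_map]
            rfl
          have hvb : ∀ S : Finset (Fin n), S.card < t →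
              ∑ j, bb j * ∏ i ∈ S, m' i j = 0 := by
            intro S hS
            have h0notmem : (0 : Fin (n+1)) ∉ S.map (Fin.succEmb n) := by
              simp only [Finset.mem_map]
              rintro ⟨i, -, hi⟩
              exact Fin.succ_ne_zero i hi
            have := hvan (insert 0 (S.map (Fin.succEmb n)))
              (by rw [Finset.card_insert_of_notMem h0notmem, Finset.card_map]; omega)
            rw [← this]
            refine Finset.sum_congr rfl fun j _ => ?_
            rw [Finset.prod_insert h0notmem, Finset.prod_map]
            simp only [hb]
            ring_nf
            rfl
          have hva : ∀ S : Finset (Fin n), S.card < t →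
              ∑ j, a j * ∏ i ∈ S, m' i j = 0 := by
            intro S hS
            have h1 := hvc S (by omega)
            have h2 := hvb S hS
            have : ∑ j, a j * ∏ i ∈ S, m' i j
                = (∑ j, c j * ∏ i ∈ S, m' i j) - ∑ j, bb j * ∏ i ∈ S, m' i j := by
              rw [← Finset.sum_sub_distrib]
              refine Finset.sum_congr rfl fun j _ => by simp only [ha, hb]; ring
            rw [this, h1, h2, sub_zero]
          have hve : ∀ S : Finset (Fin n), S.card < t →
              ∑ j, e j * ∏ i ∈ S, m' i j = 0 := by
            intro S hS
            have h1 := hvc S (by omega)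
            have h2 := hvb S hS
            have : ∑ j, e j * ∏ i ∈ S, m' i j
                = (∑ j, c j * ∏ i ∈ S, m' i j) - 2 * ∑ j, bb j * ∏ i ∈ S, m' i j := by
              rw [Finset.mul_sum, ← Finset.sum_sub_distrib]
              refine Finset.sum_congr rfl fun j _ => by simp only [he, hb]; ring
            rw [this, h1, h2, mul_zero, sub_zero]
          -- pointwise decomposition
          have hsum : ∀ x, mixtureDensity c m' x
              = mixtureDensity a m' x + mixtureDensity bb m' x := by
            intro x
            unfold mixtureDensity
            rw [← Finset.sum_add_distrib]
            refine Finset.sum_congr rfl fun j _ => by simp only [ha, hb]; ring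
          have hconsT : ∀ x, mixtureDensity c m (Fin.cons true x) = mixtureDensity bb m' x := by
            intro x; rw [mixture_cons]; rfl
          have hconsF : ∀ x, mixtureDensity c m (Fin.cons false x) = mixtureDensity a m' x := by
            intro x; rw [mixture_cons]; rfl
          by_cases hcase : ∃ x, mixtureDensity c m' x ≠ 0
          · exact ih (t+1) k c m' hm' hvc hcase
          · push_neg at hcase
            -- get nonzero witnesses for a and bb
            obtain ⟨y, hy⟩ := hex
            have hy' : mixtureDensity c m (Fin.cons (y 0) (Fin.tail y)) ≠ 0 := by
              rwa [Fin.cons_self_tail]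
            set x0 := Fin.tail y with hx0
            have hab : mixtureDensity a m' x0 = - mixtureDensity bb m' x0 := by
              have := hcase x0
              rw [hsum x0] at this
              linarith
            have hbne : mixtureDensity bb m' x0 ≠ 0 := by
              cases hyb : y 0 with
              | true => rw [hyb] at hy'; rw [hconsT] at hy'; exact hy'
              | false =>
                  rw [hyb] at hy'; rw [hconsF] at hy'
                  intro h0; rw [h0, neg_zero] at hab; exact hy' hab
            have hane : mixtureDensity a m' x0 ≠ 0 := by
              rw [hab]; simpa using hbne
            have hene : ∃ x, mixtureDensity e m' x ≠ 0 := by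
              refine ⟨x0, ?_⟩
              have hdecomp : mixtureDensity e m' x0
                  = mixtureDensity a m' x0 - mixtureDensity bb m' x0 := by
                unfold mixtureDensity
                rw [← Finset.sum_sub_distrib]
                refine Finset.sum_congr rfl fun j _ => by simp only [he, ha, hb]; ring
              rw [hdecomp, hab]
              intro h
              apply hbne
              linarith
            have Ha := ih t k a m' hm' hva ⟨x0, hane⟩
            have Hb := ih t k bb m' hm' hvb ⟨x0, hbne⟩
            have He := ih t k e m' hm' hve hene
            -- support counting
            set A := Finset.univ.filter (fun j => a j ≠ 0) with hA
            set B := Finset.univ.filter (fun j => bb j ≠ 0) with hB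
            set E := Finset.univ.filter (fun j => e j ≠ 0) with hE
            set C := Finset.univ.filter (fun j => c j ≠ 0) with hC
            have hcard : A.card + B.card + E.card ≤ 2 * C.card := by
              have hsub : ∀ (f : Fin k → ℝ), (∀ j, f j ≠ 0 → c j ≠ 0) →
                  (Finset.univ.filter (fun j => f j ≠ 0)).card
                    = ∑ j ∈ C, (if f j ≠ 0 then 1 else 0) := by
                intro f hf
                rw [← Finset.card_filter]
                congr 1
                ext j
                simp only [Finset.mem_filter, Finset.mem_univ, true_and, hC]
                exact ⟨fun h => ⟨hf j h, h⟩, fun h => h.2⟩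
              have hfa : ∀ j, a j ≠ 0 → c j ≠ 0 := by
                intro j h hcj; apply h; simp [ha, hcj]
              have hfb : ∀ j, bb j ≠ 0 → c j ≠ 0 := by
                intro j h hcj; apply h; simp [hb, hcj]
              have hfe : ∀ j, e j ≠ 0 → c j ≠ 0 := by
                intro j h hcj; apply h; simp [he, hcj]
              rw [hA, hB, hE, hsub a hfa, hsub bb hfb, hsub e hfe,
                ← Finset.sum_add_distrib, ← Finset.sum_add_distrib]
              have : ∀ j ∈ C, ((if a j ≠ 0 then 1 else 0) + (if bb j ≠ 0 then 1 else 0)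
                  + (if e j ≠ 0 then 1 else 0)) ≤ 2 := by
                intro j _
                have h3 : a j = 0 ∨ bb j = 0 ∨ e j = 0 := by
                  rcases hm 0 j with h | h | h
                  · right; left; simp [hb, h]
                  · right; right; norm_num [he, h]
                  · left; simp [ha, h]
                rcases h3 with h | h | h <;> simp [h] <;> split_ifs <;> norm_num
              calc ∑ j ∈ C, ((if a j ≠ 0 then 1 else 0) + (if bb j ≠ 0 then 1 else 0)
                    + (if e j ≠ 0 then 1 else 0)) ≤ ∑ _j ∈ C, 2 := Finset.sum_le_sum this
                _ = 2 * C.card := by rw [Finset.sum_const, smul_eq_mul, mul_comm]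
            have h2pos : (0:ℝ) < 2 ^ t := by positivity
            calc (3:ℝ)^(t+1) = 3 * 3^t := by ring
              _ ≤ 2^t * ((A.card : ℝ) + B.card + E.card) := by
                  rw [mul_add, mul_add]
                  have : (3:ℝ) * 3^t = 3^t + 3^t + 3^t := by ring
                  rw [this]
                  exact add_le_add (add_le_add Ha Hb) He
              _ ≤ 2^t * (2 * (C.card : ℝ)) := by
                  have hcardR : ((A.card : ℝ) + B.card + E.card) ≤ 2 * (C.card : ℝ) := by
                    exact_mod_cast hcard
                  exact mul_le_mul_of_nonneg_left hcardR (le_of_lt h2pos)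
              _ = 2^(t+1) * (C.card : ℝ) := by ring

/-- a mixture of `k₁` subcubes and a mixture of `k₂` subcubes that agree on all
moments of degree less than `2·log₂(k₁+k₂)` are identical as distributions. -/
theorem stmt_5 (n k₁ k₂ : ℕ) (hn : 1 ≤ n) (hk₁ : 1 ≤ k₁) (hk₂ : 1 ≤ k₂)
    (π₁ : Fin k₁ → ℝ) (hπ₁0 : ∀ j, 0 ≤ π₁ j) (hπ₁1 : ∑ j, π₁ j = 1)
    (m₁ : Fin n → Fin k₁ → ℝ)
    (hm₁ : ∀ i j, m₁ i j = 0 ∨ m₁ i j = 1/2 ∨ m₁ i j = 1)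
    (π₂ : Fin k₂ → ℝ) (hπ₂0 : ∀ j, 0 ≤ π₂ j) (hπ₂1 : ∑ j, π₂ j = 1)
    (m₂ : Fin n → Fin k₂ → ℝ)
    (hm₂ : ∀ i j, m₂ i j = 0 ∨ m₂ i j = 1/2 ∨ m₂ i j = 1)
    (hmom : ∀ S : Finset (Fin n), (S.card : ℝ) < 2 * Real.logb 2 ((k₁ : ℝ) + k₂) →
      momentOf (mixtureDensity π₁ m₁) S = momentOf (mixtureDensity π₂ m₂) S) :
    ∀ x : Fin n → Bool, mixtureDensity π₁ m₁ x = mixtureDensity π₂ m₂ x := by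
  classical
  set k := k₁ + k₂ with hkdef
  have hk : 2 ≤ k := by omega
  -- existence of a good ν
  have hP : ∃ ν, 2^ν * k < 3^ν := by
    refine ⟨2*k, ?_⟩
    have h1 : k < 2^k := Nat.lt_two_pow_self (n := k)
    have h2 : 2^(2*k) * k < 2^(2*k) * 2^k :=
      mul_lt_mul_of_pos_left h1 (pow_pos (by norm_num) _)
    have h3 : 2^(2*k) * 2^k = 8^k := by
      rw [show (8:ℕ) = 2^3 from rfl, ← pow_mul, ← pow_add]; ring_nf
    have h5 : (8:ℕ)^k ≤ 9^k := Nat.pow_le_pow_left (by norm_num) k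
    have h6 : (9:ℕ)^k = 3^(2*k) := by
      rw [show (9:ℕ) = 3^2 from rfl, ← pow_mul]
    omega
  set ν := Nat.find hP with hνdef
  have hspec : 2^ν * k < 3^ν := Nat.find_spec hP
  have hν0 : ν ≠ 0 := by
    intro h
    rw [h] at hspec
    simp at hspec
    omega
  set t := ν - 1 with htdef
  have hνt : ν = t + 1 := by omega
  have hmin : ¬(2^t * k < 3^t) := Nat.find_min hP (by omega)
  have h3t : 3^t ≤ 2^t * k := by omega
  -- 2^t < k^2
  have h2t : 2^t < k^2 := by
    rcases Nat.eq_zero_or_pos t with ht0 | ht1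
    · have : 2^2 ≤ k^2 := Nat.pow_le_pow_left hk 2
      simp [ht0]
      omega
    · have hsq : 3^t * 3^t ≤ (2^t * k) * (2^t * k) := Nat.mul_le_mul h3t h3t
      have e1 : 3^t * 3^t = 9^t := by
        rw [show (9:ℕ) = 3*3 from rfl, mul_pow]
      have e2 : (2^t * k) * (2^t * k) = 4^t * k^2 := by
        rw [show (4:ℕ) = 2*2 from rfl, mul_pow]; ring
      have e3 : 4^t * 2^t = 8^t := by
        rw [show (8:ℕ) = 4*2 from rfl, mul_pow]
      have h89 : (8:ℕ)^t < 9^t := Nat.pow_lt_pow_left (by norm_num) (by omega)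
      have h4 : 4^t * 2^t < 4^t * k^2 := by
        rw [e3]
        calc (8:ℕ)^t < 9^t := h89
          _ = 3^t * 3^t := e1.symm
          _ ≤ (2^t * k) * (2^t * k) := hsq
          _ = 4^t * k^2 := e2
      exact Nat.lt_of_mul_lt_mul_left h4
  -- the degree bound
  have hlog : ∀ S : Finset (Fin n), S.card < ν →
      (S.card : ℝ) < 2 * Real.logb 2 ((k₁ : ℝ) + k₂) := by
    intro S hS
    have hle : S.card ≤ t := by omega
    have hpowlt : (2:ℝ)^(S.card) < ((k:ℕ):ℝ)^2 := by
      calc (2:ℝ)^(S.card) ≤ (2:ℝ)^t := pow_le_pow_right₀ (by norm_num) hle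
        _ < ((k:ℕ):ℝ)^2 := by exact_mod_cast h2t
    have hcast : ((k₁ : ℝ) + k₂) = ((k:ℕ):ℝ) := by push_cast [hkdef]; ring
    rw [hcast]
    have hlhs : Real.logb 2 ((2:ℝ)^(S.card)) = (S.card : ℝ) := by
      rw [← Real.rpow_natCast 2 S.card,
        Real.logb_rpow (by norm_num : (0:ℝ) < 2) (by norm_num : (2:ℝ) ≠ 1)]
    have hrhs : Real.logb 2 (((k:ℕ):ℝ)^2) = 2 * Real.logb 2 ((k:ℕ):ℝ) := by
      rw [Real.logb_pow]; norm_num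
    have hmono := Real.logb_lt_logb (b := 2) (by norm_num) (by positivity) hpowlt
    rw [hlhs, hrhs] at hmono
    exact hmono
  -- combined mixture
  set c : Fin k → ℝ := Fin.append π₁ (fun j => -π₂ j) with hcdef
  set mm : Fin n → Fin k → ℝ := fun i => Fin.append (m₁ i) (m₂ i) with hmmdef
  have hmc : ∀ i j, mm i j = 0 ∨ mm i j = 1/2 ∨ mm i j = 1 := by
    intro i j
    refine Fin.addCases (fun j0 => ?_) (fun j0 => ?_) j
    · simp only [hmmdef, Fin.append_left]; exact hm₁ i j0
    · simp only [hmmdef, Fin.append_right]; exact hm₂ i j0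
  have hvan : ∀ S : Finset (Fin n), S.card < ν → ∑ j, c j * ∏ i ∈ S, mm i j = 0 := by
    intro S hS
    have hsplit : ∑ j, c j * ∏ i ∈ S, mm i j
        = (∑ j, π₁ j * ∏ i ∈ S, m₁ i j) - (∑ j, π₂ j * ∏ i ∈ S, m₂ i j) := by
      rw [Fin.sum_univ_add (f := fun j => c j * ∏ i ∈ S, mm i j)]
      simp only [hcdef, hmmdef, Fin.append_left, Fin.append_right]
      rw [sub_eq_add_neg, ← Finset.sum_neg_distrib]
      congr 1 <;> exact Finset.sum_congr rfl fun j _ => by ring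
    rw [hsplit, ← momentOf_mixture, ← momentOf_mixture, hmom S (hlog S hS), sub_self]
  intro x
  by_contra hx
  have hex : mixtureDensity c mm x ≠ 0 := by
    have hsplit : mixtureDensity c mm x
        = mixtureDensity π₁ m₁ x - mixtureDensity π₂ m₂ x := by
      unfold mixtureDensity
      rw [Fin.sum_univ_add (f := fun j => c j * ∏ i, (if x i then mm i j else 1 - mm i j))]
      simp only [hcdef, hmmdef, Fin.append_left, Fin.append_right]
      rw [sub_eq_add_neg, ← Finset.sum_neg_distrib]
      congr 1 <;> exact Finset.sum_congr rfl fun j _ => by ring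
    rw [hsplit]
    exact sub_ne_zero.mpr hx
  have hkey := key n ν k c mm hmc hvan ⟨x, hex⟩
  have hcardle : (Finset.univ.filter (fun j => c j ≠ 0)).card ≤ k := by
    calc (Finset.univ.filter (fun j => c j ≠ 0)).card
        ≤ (Finset.univ : Finset (Fin k)).card := Finset.card_filter_le _ _
      _ = k := by simp
  have hfinal : (3:ℝ)^ν ≤ 2^ν * (k:ℝ) := by
    calc (3:ℝ)^ν ≤ 2^ν * ((Finset.univ.filter (fun j => c j ≠ 0)).card : ℝ) := hkey
      _ ≤ 2^ν * (k:ℝ) := by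
          apply mul_le_mul_of_nonneg_left _ (by positivity)
          exact_mod_cast hcardle
  have hspecR : 2^ν * (k:ℝ) < (3:ℝ)^ν := by exact_mod_cast hspec
  linarith
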